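/- Let μ be a finite positive Borel measure on ℝ with compact support. Then the sequence of monomials (e_k)_{k∈ℕ}, e_k(t) = t^k, is a Bessel sequence in L²(μ) if and only if there exists C > 0 such that μ({t : |t| > 1 − ε}) ≤ Cε for all ε ∈ (0,1). -/

import Mathlib

open MeasureTheory

/-- The monomials `(t^k)_{k∈ℕ}` form a Bessel sequence in `L²(μ)` with bound `C`:
`∑_k |⟨g, e_k⟩_{L²(μ)}|² ≤ C‖g‖²_{L²(μ)}` for every `g ∈ L²(μ)`
(stated via finite partial sums). -/
def MonomialsBesselWithReal (μ : Measure ℝ) (C : ℝ) : Prop :=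
  ∀ g : ℝ → ℂ, MemLp g 2 μ → ∀ F : Finset ℕ,
    ∑ k ∈ F, ‖∫ t, g t * (starRingEnd ℂ) ((t : ℂ) ^ k) ∂μ‖ ^ 2 ≤ C * ∫ t, ‖g t‖ ^ 2 ∂μ

section Aux
open Finset



lemma geom_sum_aux (x : ℝ) (hx0 : 0 ≤ x) (hx : x ≤ 1/2) (n : ℕ) :
    ∑ i ∈ range n, ((i:ℝ)+1) * x ^ i ≤ 4 - (2*n+4) * x^n := by
  induction n with
  | zero => simp
  | succ n ih =>
    rw [Finset.sum_range_succ]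
    have hxn : (0:ℝ) ≤ x ^ n := pow_nonneg hx0 n
    have hb : (2*(n:ℝ)+6) * x ≤ (n:ℝ)+3 := by nlinarith
    have h2 : (2*(n:ℝ)+6) * x^(n+1) ≤ ((n:ℝ)+3) * x^n := by
      rw [pow_succ]
      nlinarith [mul_le_mul_of_nonneg_left hb hxn]
    push_cast
    nlinarith

-- a.e. |t| < 1
lemma ae_abs_lt_one (μ : Measure ℝ) [IsFiniteMeasure μ] (C : ℝ) (hC : 0 < C)
    (htail : ∀ ε ∈ Set.Ioo (0:ℝ) 1, μ {t : ℝ | 1 - ε < |t|} ≤ ENNReal.ofReal (C * ε)) :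
    ∀ᵐ t ∂μ, |t| < 1 := by
  rw [ae_iff]
  simp only [not_lt]
  by_contra h
  set S := {t : ℝ | 1 ≤ |t|} with hS
  have hfin : μ S ≠ ⊤ := measure_ne_top μ S
  have hpos : 0 < (μ S).toReal := ENNReal.toReal_pos h hfin
  set ε := min (1/2) ((μ S).toReal / (2*C)) with hε
  have hε0 : 0 < ε := lt_min (by norm_num) (by positivity)
  have hε1 : ε < 1 := lt_of_le_of_lt (min_le_left _ _) (by norm_num)
  have hsub : S ⊆ {t : ℝ | 1 - ε < |t|} := by
    intro t ht
    simp only [hS, Set.mem_setOf_eq] at ht ⊢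
    linarith
  have hle : μ S ≤ ENNReal.ofReal (C * ε) := le_trans (measure_mono hsub) (htail ε ⟨hε0, hε1⟩)
  have hCε : C * ε ≤ (μ S).toReal / 2 := by
    have : ε ≤ (μ S).toReal / (2*C) := min_le_right _ _
    calc C * ε ≤ C * ((μ S).toReal / (2*C)) := by nlinarith
      _ = (μ S).toReal / 2 := by field_simp
  have : μ S ≤ ENNReal.ofReal ((μ S).toReal / 2) :=
    le_trans hle (ENNReal.ofReal_le_ofReal hCε)
  have h2 : (μ S).toReal ≤ (μ S).toReal / 2 :=
    ENNReal.toReal_le_of_le_ofReal (by linarith) this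
  linarith

lemma moment_bound (μ : Measure ℝ) [IsFiniteMeasure μ] (C : ℝ) (hC : 0 < C)
    (htail : ∀ ε ∈ Set.Ioo (0:ℝ) 1, μ {t : ℝ | 1 - ε < |t|} ≤ ENNReal.ofReal (C * ε)) (n : ℕ) :
    ∫ t, |t|^n ∂μ ≤ (4*C + 2*(μ Set.univ).toReal) / ((n:ℝ)+1) := by
  have hae := ae_abs_lt_one μ C hC htail
  have hu0 : 0 ≤ (μ Set.univ).toReal := ENNReal.toReal_nonneg
  rcases Nat.eq_zero_or_pos n with hn | hn
  · subst hn
    simp only [pow_zero, Nat.cast_zero]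
    rw [integral_const]
    simp only [smul_eq_mul, mul_one]
    norm_num
    linarith [measureReal_def μ Set.univ]
  -- now n ≥ 1
  set D : ℕ → Set ℝ := fun i => {s : ℝ | 1 - ((i:ℝ)+1)/((n:ℝ)+1) < |s|} with hDdef
  have hDmeas : ∀ i, MeasurableSet (D i) :=
    fun i => measurableSet_lt measurable_const continuous_abs.measurable
  have hn1 : (1:ℝ) ≤ (n:ℝ) := by exact_mod_cast hn
  -- pointwise estimate
  have hpt : ∀ t : ℝ, |t| < 1 →
      |t|^n ≤ (1/2)^n + ∑ i ∈ range n, (1/2:ℝ)^i * (D i).indicator (fun _ => (1:ℝ)) t := by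
    intro t ht
    have h0 : 0 ≤ |t| := abs_nonneg t
    have hsum0 : 0 ≤ ∑ i ∈ range n, (1/2:ℝ)^i * (D i).indicator (fun _ => (1:ℝ)) t := by
      refine Finset.sum_nonneg fun i _ => mul_nonneg (by positivity) ?_
      exact Set.indicator_nonneg (fun _ _ => zero_le_one) t
    rcases le_or_gt |t| (1/((n:ℝ)+1)) with hx | hx
    · have h1 : |t|^n ≤ (1/((n:ℝ)+1))^n := pow_le_pow_left₀ h0 hx n
      have h2 : (1/((n:ℝ)+1))^n ≤ (1/2:ℝ)^n := by
        apply pow_le_pow_left₀ (by positivity)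
        rw [div_le_div_iff₀ (by positivity) (by norm_num)]
        linarith
      linarith
    · set i := ⌊((n:ℝ)+1)*(1-|t|)⌋₊ with hidef
      have hval0 : 0 ≤ ((n:ℝ)+1)*(1-|t|) := by nlinarith
      have hiltn : i < n := by
        rw [hidef, Nat.floor_lt hval0]
        have hinv : 1 < ((n:ℝ)+1) * |t| := by
          rw [div_lt_iff₀ (by positivity)] at hx
          linarith
        nlinarith
      have hflt := Nat.lt_floor_add_one (((n:ℝ)+1)*(1-|t|))
      rw [← hidef] at hflt
      have hmem : t ∈ D i := by
        simp only [hDdef, Set.mem_setOf_eq]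
        rw [sub_lt_comm, lt_div_iff₀ (by positivity : (0:ℝ) < (n:ℝ)+1)]
        nlinarith
      have hile : (i:ℝ) ≤ ((n:ℝ)+1)*(1-|t|) := Nat.floor_le hval0
      have hxle : |t| ≤ 1 - (i:ℝ)/((n:ℝ)+1) := by
        have hq : (i:ℝ)/((n:ℝ)+1) ≤ 1 - |t| := by
          rw [div_le_iff₀ (by positivity : (0:ℝ) < (n:ℝ)+1)]
          nlinarith
        linarith
      have hb0 : (0:ℝ) ≤ 1 - 1/((n:ℝ)+1) := by
        rw [sub_nonneg, div_le_one (by positivity)]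
        linarith
      have hbern : 1 - (i:ℝ)/((n:ℝ)+1) ≤ (1 - 1/((n:ℝ)+1))^i := by
        have hber := one_add_mul_le_pow (a := -(1/((n:ℝ)+1))) (by nlinarith [hb0]) i
        have e1 : 1 + (i:ℝ) * (-(1/((n:ℝ)+1))) = 1 - (i:ℝ)/((n:ℝ)+1) := by ring
        have e2 : (1:ℝ) + -(1/((n:ℝ)+1)) = 1 - 1/((n:ℝ)+1) := by ring
        rw [e1, e2] at hber
        exact hber
      have hhalf : (1 - 1/((n:ℝ)+1))^n ≤ 1/2 := by
        have hnne : (n:ℝ) ≠ 0 := by linarith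
        have h2 : (2:ℝ) ≤ (1 + 1/(n:ℝ))^n := by
          have hber := one_add_mul_le_pow (a := 1/(n:ℝ))
            (by have : (0:ℝ) ≤ 1/(n:ℝ) := by positivity
                linarith) n
          rw [mul_one_div, div_self hnne] at hber
          linarith
        have hprod : (1 - 1/((n:ℝ)+1)) * (1 + 1/(n:ℝ)) = 1 := by
          field_simp
          ring
        have hpow1 : (1 - 1/((n:ℝ)+1))^n * (1 + 1/(n:ℝ))^n = 1 := by
          rw [← mul_pow, hprod, one_pow]
        nlinarith [pow_nonneg hb0 n]
      have hchain : |t|^n ≤ (1/2:ℝ)^i := by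
        have hs1 : |t|^n ≤ (1 - (i:ℝ)/((n:ℝ)+1))^n := pow_le_pow_left₀ h0 hxle n
        have hnn2 : (0:ℝ) ≤ 1 - (i:ℝ)/((n:ℝ)+1) := le_trans h0 hxle
        have hs2 : (1 - (i:ℝ)/((n:ℝ)+1))^n ≤ ((1 - 1/((n:ℝ)+1))^i)^n :=
          pow_le_pow_left₀ hnn2 hbern n
        have hs3 : ((1 - 1/((n:ℝ)+1))^i)^n = ((1 - 1/((n:ℝ)+1))^n)^i := by
          rw [← pow_mul, ← pow_mul, Nat.mul_comm]
        have hs4 : ((1 - 1/((n:ℝ)+1))^n)^i ≤ (1/2:ℝ)^i :=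
          pow_le_pow_left₀ (pow_nonneg hb0 n) hhalf i
        calc |t|^n ≤ (1 - (i:ℝ)/((n:ℝ)+1))^n := hs1
          _ ≤ ((1 - 1/((n:ℝ)+1))^i)^n := hs2
          _ = ((1 - 1/((n:ℝ)+1))^n)^i := hs3
          _ ≤ (1/2:ℝ)^i := hs4
      have hindic : (D i).indicator (fun _ => (1:ℝ)) t = 1 := Set.indicator_of_mem hmem (fun _ => (1:ℝ))
      have hsingle : (1/2:ℝ)^i * (D i).indicator (fun _ => (1:ℝ)) t ≤
          ∑ j ∈ range n, (1/2:ℝ)^j * (D j).indicator (fun _ => (1:ℝ)) t := by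
        refine Finset.single_le_sum
          (f := fun j => (1/2:ℝ)^j * (D j).indicator (fun _ => (1:ℝ)) t)
          (fun j _ => mul_nonneg (by positivity)
            (Set.indicator_nonneg (fun _ _ => zero_le_one) t))
          (Finset.mem_range.mpr hiltn)
      rw [hindic, mul_one] at hsingle
      have h12n : (0:ℝ) ≤ (1/2:ℝ)^n := by positivity
      linarith
  -- integrability
  have hlhs_int : Integrable (fun t : ℝ => |t|^n) μ := by
    refine Integrable.mono' (integrable_const (1:ℝ))
      ((continuous_abs.pow n).aestronglyMeasurable) ?_
    filter_upwards [hae] with t ht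
    rw [Real.norm_eq_abs, abs_of_nonneg (by positivity)]
    exact pow_le_one₀ (abs_nonneg t) (le_of_lt ht)
  have hind_int : ∀ i ∈ range n,
      Integrable (fun t : ℝ => (1/2:ℝ)^i * (D i).indicator (fun _ => (1:ℝ)) t) μ := by
    intro i _
    exact ((integrable_const (1:ℝ)).indicator (hDmeas i)).const_mul _
  have hrhs_int : Integrable (fun t : ℝ =>
      (1/2:ℝ)^n + ∑ i ∈ range n, (1/2:ℝ)^i * (D i).indicator (fun _ => (1:ℝ)) t) μ :=
    (integrable_const _).add (integrable_finset_sum _ hind_int)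
  have hle1 : ∫ t, |t|^n ∂μ ≤ ∫ t, ((1/2:ℝ)^n
      + ∑ i ∈ range n, (1/2:ℝ)^i * (D i).indicator (fun _ => (1:ℝ)) t) ∂μ := by
    refine integral_mono_ae hlhs_int hrhs_int ?_
    filter_upwards [hae] with t ht using hpt t ht
  have hms : ∀ i ∈ range n, (μ (D i)).toReal ≤ C * (((i:ℝ)+1)/((n:ℝ)+1)) := by
    intro i hi
    have hiltn := Finset.mem_range.mp hi
    have hiltn' : (i:ℝ) < (n:ℝ) := by exact_mod_cast hiltn
    have hmem : ((i:ℝ)+1)/((n:ℝ)+1) ∈ Set.Ioo (0:ℝ) 1 := by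
      constructor
      · positivity
      · rw [div_lt_one (by positivity)]; linarith
    have := htail _ hmem
    exact ENNReal.toReal_le_of_le_ofReal (by positivity) this
  have heval : ∫ t, ((1/2:ℝ)^n
      + ∑ i ∈ range n, (1/2:ℝ)^i * (D i).indicator (fun _ => (1:ℝ)) t) ∂μ
      = (1/2:ℝ)^n * (μ Set.univ).toReal
        + ∑ i ∈ range n, (1/2:ℝ)^i * (μ (D i)).toReal := by
    rw [integral_add (integrable_const _) (integrable_finset_sum _ hind_int),
      integral_const, integral_finset_sum _ hind_int]
    congr 1
    · simp [mul_comm, measureReal_def]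
    · refine Finset.sum_congr rfl fun i _ => ?_
      rw [integral_const_mul, integral_indicator_const _ (hDmeas i)]
      simp [measureReal_def]
  have hsum_le : ∑ i ∈ range n, (1/2:ℝ)^i * (μ (D i)).toReal ≤ 4 * C / ((n:ℝ)+1) := by
    calc ∑ i ∈ range n, (1/2:ℝ)^i * (μ (D i)).toReal
        ≤ ∑ i ∈ range n, (1/2:ℝ)^i * (C * (((i:ℝ)+1)/((n:ℝ)+1))) := by
          refine Finset.sum_le_sum fun i hi => ?_
          exact mul_le_mul_of_nonneg_left (hms i hi) (by positivity)
      _ = (C / ((n:ℝ)+1)) * ∑ i ∈ range n, ((i:ℝ)+1) * (1/2:ℝ)^i := by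
          rw [Finset.mul_sum]
          refine Finset.sum_congr rfl fun i _ => ?_
          ring
      _ ≤ (C / ((n:ℝ)+1)) * 4 := by
          refine mul_le_mul_of_nonneg_left ?_ (by positivity)
          have := geom_sum_aux (1/2) (by norm_num) (by norm_num) n
          have h4 : (0:ℝ) ≤ (2*(n:ℝ)+4) * (1/2:ℝ)^n := by positivity
          linarith
      _ = 4 * C / ((n:ℝ)+1) := by ring
  have hhead : (1/2:ℝ)^n * (μ Set.univ).toReal ≤ 2 * (μ Set.univ).toReal / ((n:ℝ)+1) := by
    have hp : ((n:ℝ)+1) ≤ 2 * 2^n := by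
      have h1 := n.lt_two_pow_self
      have h2 : (n:ℝ) < 2^n := by exact_mod_cast h1
      linarith
    have e : (1/2:ℝ)^n = ((2:ℝ)^n)⁻¹ := by rw [one_div, inv_pow]
    have hpow : ((n:ℝ)+1) * ((2:ℝ)^n)⁻¹ ≤ 2 := by
      rw [← div_eq_mul_inv, div_le_iff₀ (by positivity)]
      linarith
    rw [e, le_div_iff₀ (by positivity : (0:ℝ) < (n:ℝ)+1)]
    nlinarith [mul_le_mul_of_nonneg_right hpow hu0, inv_nonneg.mpr (le_of_lt (by positivity : (0:ℝ) < (2:ℝ)^n))]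
  calc ∫ t, |t|^n ∂μ ≤ _ := hle1
    _ = _ := heval
    _ ≤ 2 * (μ Set.univ).toReal / ((n:ℝ)+1) + 4 * C / ((n:ℝ)+1) := by
        exact add_le_add hhead hsum_le
    _ = (4*C + 2*(μ Set.univ).toReal) / ((n:ℝ)+1) := by ring


lemma hilbert_ineq (γ : ℕ → ℝ) (hγ : ∀ k, 0 ≤ γ k) (N : ℕ) :
    ∑ k ∈ range N, ∑ l ∈ range N, γ k * γ l / ((k:ℝ)+l+1) ≤ 4 * ∑ k ∈ range N, γ k ^ 2 := by
  set P : ℕ → ℝ := fun k => ∑ l ∈ range (k+1), γ l with hP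
  set A : ℕ → ℝ := fun k => P k / ((k:ℝ)+1) with hA
  have hPnn : ∀ k, 0 ≤ P k := fun k => Finset.sum_nonneg fun l _ => hγ l
  have hAnn : ∀ k, 0 ≤ A k := fun k => div_nonneg (hPnn k) (by positivity)
  have hAP : ∀ k, A k * ((k:ℝ)+1) = P k := fun k => div_mul_cancel₀ _ (by positivity)
  have hPsucc : ∀ n, P (n+1) = P n + γ (n+1) := fun n => Finset.sum_range_succ _ _
  -- telescoping Hardy step
  have h1 : ∀ n : ℕ, ((n:ℝ)+1) * A n ^ 2 ≤ ∑ k ∈ range (n+1), (2 * A k * γ k - A k ^ 2) := by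
    intro n
    induction n with
    | zero =>
      have : A 0 = γ 0 := by simp [hA, hP]
      simp [this]
      nlinarith [sq_nonneg (γ 0)]
    | succ n ih =>
      rw [Finset.sum_range_succ]
      have hg : γ (n+1) = ((n:ℝ)+2) * A (n+1) - ((n:ℝ)+1) * A n := by
        have e1 := hAP (n+1)
        have e2 := hAP n
        have e3 := hPsucc n
        push_cast at e1
        nlinarith [e1, e2, e3]
      have hg2 : A (n+1) * γ (n+1) = A (n+1) * (((n:ℝ)+2) * A (n+1) - ((n:ℝ)+1) * A n) := by
        rw [hg]
      have hsq : 0 ≤ ((n:ℝ)+1) * (A (n+1) - A n) ^ 2 :=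
        mul_nonneg (by positivity) (sq_nonneg _)
      push_cast
      nlinarith [ih, hg2, hsq]
  -- split the kernel
  have hterm : ∀ k ∈ range N, ∀ l ∈ range N,
      γ k * γ l / ((k:ℝ)+l+1) ≤
        (if l ≤ k then γ k * γ l / ((k:ℝ)+1) else 0)
        + (if k ≤ l then γ k * γ l / ((l:ℝ)+1) else 0) := by
    intro k _ l _
    have hnn : 0 ≤ γ k * γ l := mul_nonneg (hγ k) (hγ l)
    have hl0 := Nat.cast_nonneg (α := ℝ) l
    have hk0 := Nat.cast_nonneg (α := ℝ) k
    rcases le_total l k with h | h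
    · rw [if_pos h]
      have h2 : γ k * γ l / ((k:ℝ)+l+1) ≤ γ k * γ l / ((k:ℝ)+1) := by
        gcongr <;> first | positivity | linarith
      have h3 : (0:ℝ) ≤ (if k ≤ l then γ k * γ l / ((l:ℝ)+1) else 0) := by
        split <;> positivity
      linarith
    · rw [if_pos h]
      have h2 : γ k * γ l / ((k:ℝ)+l+1) ≤ γ k * γ l / ((l:ℝ)+1) := by
        gcongr <;> first | positivity | linarith
      have h3 : (0:ℝ) ≤ (if l ≤ k then γ k * γ l / ((k:ℝ)+1) else 0) := by
        split <;> positivity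
      linarith
  -- triangular sums
  have hfilter : ∀ k ∈ range N, (range N).filter (fun l => l ≤ k) = range (k+1) := by
    intro k hk
    rw [Finset.mem_range] at hk
    ext l
    simp only [Finset.mem_filter, Finset.mem_range]
    omega
  have hV1 : ∀ k ∈ range N,
      (∑ l ∈ range N, if l ≤ k then γ k * γ l / ((k:ℝ)+1) else 0) = γ k * A k := by
    intro k hk
    rw [← Finset.sum_filter, hfilter k hk, ← Finset.sum_div, ← Finset.mul_sum,
      mul_div_assoc, hA]
  have hV2 : (∑ k ∈ range N, ∑ l ∈ range N, if k ≤ l then γ k * γ l / ((l:ℝ)+1) else 0)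
      = ∑ k ∈ range N, γ k * A k := by
    rw [Finset.sum_comm]
    refine Finset.sum_congr rfl fun k hk => ?_
    rw [← hV1 k hk]
    refine Finset.sum_congr rfl fun l _ => ?_
    rw [mul_comm (γ l) (γ k)]
  have hT : ∑ k ∈ range N, ∑ l ∈ range N, γ k * γ l / ((k:ℝ)+l+1)
      ≤ 2 * ∑ k ∈ range N, γ k * A k := by
    calc ∑ k ∈ range N, ∑ l ∈ range N, γ k * γ l / ((k:ℝ)+l+1)
        ≤ ∑ k ∈ range N, ∑ l ∈ range N,
            ((if l ≤ k then γ k * γ l / ((k:ℝ)+1) else 0)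
              + (if k ≤ l then γ k * γ l / ((l:ℝ)+1) else 0)) := by
          refine Finset.sum_le_sum fun k hk => Finset.sum_le_sum fun l hl => hterm k hk l hl
      _ = (∑ k ∈ range N, ∑ l ∈ range N, if l ≤ k then γ k * γ l / ((k:ℝ)+1) else 0)
          + ∑ k ∈ range N, ∑ l ∈ range N, if k ≤ l then γ k * γ l / ((l:ℝ)+1) else 0 := by
          rw [← Finset.sum_add_distrib]
          exact Finset.sum_congr rfl fun k _ => Finset.sum_add_distrib
      _ = 2 * ∑ k ∈ range N, γ k * A k := by
          rw [hV2, Finset.sum_congr rfl hV1]; ring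
  -- Hardy: X ≤ 2 W
  have hX2W : ∑ k ∈ range N, A k ^ 2 ≤ 2 * ∑ k ∈ range N, γ k * A k := by
    have h0 : (0:ℝ) ≤ ∑ k ∈ range N, (2 * A k * γ k - A k ^ 2) := by
      cases N with
      | zero => simp
      | succ n =>
        refine le_trans ?_ (h1 n)
        positivity
    have : ∑ k ∈ range N, (2 * A k * γ k - A k ^ 2)
        = 2 * (∑ k ∈ range N, γ k * A k) - ∑ k ∈ range N, A k ^ 2 := by
      rw [Finset.sum_sub_distrib, Finset.mul_sum]
      congr 1
      exact Finset.sum_congr rfl fun k _ => by ring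
    linarith [this ▸ h0]
  have hCS := Finset.sum_mul_sq_le_sq_mul_sq (range N) γ A
  have hWnn : 0 ≤ ∑ k ∈ range N, γ k * A k :=
    Finset.sum_nonneg fun k _ => mul_nonneg (hγ k) (hAnn k)
  have hYnn : 0 ≤ ∑ k ∈ range N, γ k ^ 2 :=
    Finset.sum_nonneg fun k _ => sq_nonneg _
  set W := ∑ k ∈ range N, γ k * A k
  set Y := ∑ k ∈ range N, γ k ^ 2
  set X := ∑ k ∈ range N, A k ^ 2
  have hW2Y : W ≤ 2 * Y := by
    rcases eq_or_lt_of_le hWnn with h | h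
    · nlinarith
    · nlinarith [hCS, hX2W]
  linarith [hT, hW2Y]



lemma bessel_of_tail (μ : Measure ℝ) [IsFiniteMeasure μ] (C : ℝ) (hC : 0 < C)
    (htail : ∀ ε ∈ Set.Ioo (0:ℝ) 1, μ {t : ℝ | 1 - ε < |t|} ≤ ENNReal.ofReal (C * ε)) :
    MonomialsBesselWithReal μ (4 * (4*C + 2*(μ Set.univ).toReal)) := by
  intro g hg F
  have hu0 : 0 ≤ (μ Set.univ).toReal := ENNReal.toReal_nonneg
  set C₁ : ℝ := 4*C + 2*(μ Set.univ).toReal with hC₁def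
  have hC₁ : 0 < C₁ := by rw [hC₁def]; nlinarith
  have hae := ae_abs_lt_one μ C hC htail
  have hgm := hg.aestronglyMeasurable
  have hgni : Integrable (fun t => ‖g t‖) μ := (hg.integrable one_le_two).norm
  have hg2 : Integrable (fun t => ‖g t‖^2) μ := hg.norm.integrable_sq
  have habs_int : ∀ m : ℕ, Integrable (fun t : ℝ => |t|^m) μ := by
    intro m
    refine Integrable.mono' (integrable_const (1:ℝ))
      ((continuous_abs.pow m).aestronglyMeasurable) ?_
    filter_upwards [hae] with t ht
    rw [Real.norm_eq_abs, abs_of_nonneg (by positivity)]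
    exact pow_le_one₀ (abs_nonneg t) ht.le
  set β : ℕ → ℝ := fun k => ∫ t, ‖g t‖ * |t|^k ∂μ with hβdef
  have hβint : ∀ k : ℕ, Integrable (fun t => ‖g t‖ * |t|^k) μ := by
    intro k
    refine Integrable.mono' hgni
      (hgm.norm.mul ((continuous_abs.pow k).aestronglyMeasurable)) ?_
    filter_upwards [hae] with t ht
    have h1 : |t|^k ≤ 1 := pow_le_one₀ (abs_nonneg t) ht.le
    rw [Real.norm_eq_abs, abs_of_nonneg (by positivity)]
    nlinarith [norm_nonneg (g t), pow_nonneg (abs_nonneg t) k]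
  have hβ0 : ∀ k, 0 ≤ β k := fun k => integral_nonneg fun t => by positivity
  have hterm : ∀ k : ℕ, ‖∫ t, g t * (starRingEnd ℂ) ((t:ℂ)^k) ∂μ‖ ≤ β k := by
    intro k
    refine le_trans (norm_integral_le_integral_norm _) (le_of_eq ?_)
    rw [hβdef]
    refine integral_congr_ae (Filter.Eventually.of_forall fun t => ?_)
    show ‖g t * (starRingEnd ℂ) ((t:ℂ)^k)‖ = ‖g t‖ * |t|^k
    rw [norm_mul, RCLike.norm_conj, norm_pow, Complex.norm_real, Real.norm_eq_abs]
  set B : ℝ := ∑ k ∈ F, β k ^ 2 with hBdef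
  have hSB : ∑ k ∈ F, ‖∫ t, g t * (starRingEnd ℂ) ((t:ℂ)^k) ∂μ‖ ^ 2 ≤ B := by
    refine Finset.sum_le_sum fun k _ => ?_
    exact pow_le_pow_left₀ (norm_nonneg _) (hterm k) 2
  set q : ℝ → ℝ := fun t => ∑ k ∈ F, β k * |t|^k with hqdef
  have hqc : Continuous q := by
    refine continuous_finset_sum _ fun k _ => continuous_const.mul (continuous_abs.pow k)
  have hQ0 : 0 ≤ ∑ k ∈ F, β k := Finset.sum_nonneg fun k _ => hβ0 k
  have hq0 : ∀ t, 0 ≤ q t := fun t => Finset.sum_nonneg fun k _ =>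
    mul_nonneg (hβ0 k) (pow_nonneg (abs_nonneg t) k)
  have hqb : ∀ᵐ t ∂μ, q t ≤ ∑ k ∈ F, β k := by
    filter_upwards [hae] with t ht
    refine Finset.sum_le_sum fun k _ => ?_
    have h1 : |t|^k ≤ 1 := pow_le_one₀ (abs_nonneg t) ht.le
    nlinarith [hβ0 k, pow_nonneg (abs_nonneg t) k]
  have hq2int : Integrable (fun t => q t ^ 2) μ := by
    refine Integrable.mono' (integrable_const ((∑ k ∈ F, β k)^2))
      ((hqc.pow 2).aestronglyMeasurable) ?_
    filter_upwards [hqb] with t ht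
    rw [Real.norm_eq_abs, abs_of_nonneg (pow_nonneg (hq0 t) 2)]
    exact pow_le_pow_left₀ (hq0 t) ht 2
  have hgq_int : Integrable (fun t => ‖g t‖ * q t) μ := by
    refine Integrable.mono' (hgni.const_mul (∑ k ∈ F, β k))
      (hgm.norm.mul hqc.aestronglyMeasurable) ?_
    filter_upwards [hqb] with t ht
    rw [Real.norm_eq_abs, abs_of_nonneg (mul_nonneg (norm_nonneg _) (hq0 t))]
    nlinarith [norm_nonneg (g t), hq0 t]
  have hBeq : B = ∫ t, ‖g t‖ * q t ∂μ := by
    rw [hBdef]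
    have e1 : ∀ k ∈ F, β k ^ 2 = ∫ t, β k * (‖g t‖ * |t|^k) ∂μ := by
      intro k _
      rw [integral_const_mul, sq]
    rw [Finset.sum_congr rfl e1, ← integral_finset_sum _ (fun k _ => (hβint k).const_mul _)]
    refine integral_congr_ae (Filter.Eventually.of_forall fun t => ?_)
    rw [hqdef]
    simp only
    rw [Finset.mul_sum]
    exact Finset.sum_congr rfl fun k _ => by ring
  obtain ⟨N, hFN⟩ := F.exists_nat_subset_range
  set γ : ℕ → ℝ := fun k => if k ∈ F then β k else 0 with hγdef
  have hγ0 : ∀ k, 0 ≤ γ k := by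
    intro k
    rw [hγdef]
    dsimp only
    split
    · exact hβ0 _
    · exact le_rfl
  have hq2eq : ∫ t, q t ^ 2 ∂μ = ∑ k ∈ F, ∑ l ∈ F, β k * β l * ∫ t, |t|^(k+l) ∂μ := by
    have e : ∀ t, q t ^ 2 = ∑ k ∈ F, ∑ l ∈ F, β k * β l * |t|^(k+l) := by
      intro t
      rw [hqdef]
      simp only
      rw [sq, Finset.sum_mul_sum]
      refine Finset.sum_congr rfl fun k _ => Finset.sum_congr rfl fun l _ => ?_
      rw [pow_add]; ring
    rw [integral_congr_ae (Filter.Eventually.of_forall e),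
      integral_finset_sum _ (fun k _ => integrable_finset_sum _
        (fun l _ => ((habs_int (k+l)).const_mul _)))]
    refine Finset.sum_congr rfl fun k _ => ?_
    rw [integral_finset_sum _ (fun l _ => ((habs_int (k+l)).const_mul _))]
    exact Finset.sum_congr rfl fun l _ => integral_const_mul _ _
  have hq2le : ∫ t, q t ^ 2 ∂μ ≤ 4 * C₁ * B := by
    have step1 : ∑ k ∈ F, ∑ l ∈ F, β k * β l * ∫ t, |t|^(k+l) ∂μ
        ≤ C₁ * ∑ k ∈ F, ∑ l ∈ F, γ k * γ l / ((k:ℝ)+l+1) := by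
      rw [Finset.mul_sum]
      refine Finset.sum_le_sum fun k hk => ?_
      rw [Finset.mul_sum]
      refine Finset.sum_le_sum fun l hl => ?_
      have hm := moment_bound μ C hC htail (k+l)
      have hcast : (((k+l : ℕ)):ℝ) + 1 = (k:ℝ)+l+1 := by push_cast; ring
      rw [hcast, ← hC₁def] at hm
      have hγk : γ k = β k := by rw [hγdef]; simp [hk]
      have hγl : γ l = β l := by rw [hγdef]; simp [hl]
      rw [hγk, hγl]
      have h1 : β k * β l * ∫ t, |t|^(k+l) ∂μ ≤ β k * β l * (C₁ / ((k:ℝ)+l+1)) :=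
        mul_le_mul_of_nonneg_left hm (mul_nonneg (hβ0 k) (hβ0 l))
      calc β k * β l * ∫ t, |t|^(k+l) ∂μ ≤ β k * β l * (C₁ / ((k:ℝ)+l+1)) := h1
        _ = C₁ * (β k * β l / ((k:ℝ)+l+1)) := by ring
    have step2 : ∑ k ∈ F, ∑ l ∈ F, γ k * γ l / ((k:ℝ)+l+1)
        = ∑ k ∈ range N, ∑ l ∈ range N, γ k * γ l / ((k:ℝ)+l+1) := by
      rw [Finset.sum_subset hFN]
      · refine Finset.sum_congr rfl fun k _ => ?_
        rw [Finset.sum_subset hFN]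
        intro l _ hl
        have : γ l = 0 := by rw [hγdef]; simp [hl]
        rw [this, mul_zero, zero_div]
      · intro k _ hk
        have : γ k = 0 := by rw [hγdef]; simp [hk]
        refine Finset.sum_eq_zero fun l _ => ?_
        rw [this, zero_mul, zero_div]
    have hvan : ∀ k ∈ range N, k ∉ F → γ k ^ 2 = 0 := by
      intro k _ hk
      rw [hγdef]
      simp [hk]
    have step3 : ∑ k ∈ range N, γ k ^ 2 = B := by
      rw [← Finset.sum_subset hFN hvan, hBdef]
      exact Finset.sum_congr rfl fun k hk => by rw [hγdef]; simp [hk]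
    have hhil := hilbert_ineq γ hγ0 N
    rw [step3] at hhil
    calc ∫ t, q t ^ 2 ∂μ = ∑ k ∈ F, ∑ l ∈ F, β k * β l * ∫ t, |t|^(k+l) ∂μ := hq2eq
      _ ≤ C₁ * ∑ k ∈ F, ∑ l ∈ F, γ k * γ l / ((k:ℝ)+l+1) := step1
      _ = C₁ * ∑ k ∈ range N, ∑ l ∈ range N, γ k * γ l / ((k:ℝ)+l+1) := by rw [step2]
      _ ≤ C₁ * (4 * B) := mul_le_mul_of_nonneg_left hhil (le_of_lt hC₁)
      _ = 4 * C₁ * B := by ring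
  have hAM : 2 * B ≤ 4*C₁ * (∫ t, ‖g t‖^2 ∂μ) + (1/(4*C₁)) * ∫ t, q t ^ 2 ∂μ := by
    have hpt : ∀ t, 2 * (‖g t‖ * q t) ≤ 4*C₁*‖g t‖^2 + (1/(4*C₁))*(q t)^2 := by
      intro t
      have h2 : 0 ≤ (4*C₁*‖g t‖ - q t)^2 / (4*C₁) := by positivity
      have h3 : (4*C₁*‖g t‖ - q t)^2 / (4*C₁)
          = 4*C₁*‖g t‖^2 - 2*(‖g t‖*q t) + (1/(4*C₁))*(q t)^2 := by
        field_simp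
        ring
      rw [h3] at h2
      linarith
    have hint2 : Integrable (fun t => 4*C₁*‖g t‖^2 + (1/(4*C₁))*(q t)^2) μ :=
      (hg2.const_mul (4*C₁)).add (hq2int.const_mul (1/(4*C₁)))
    have hmono := integral_mono (hgq_int.const_mul 2) hint2 hpt
    rw [integral_const_mul] at hmono
    rw [integral_add (hg2.const_mul (4*C₁)) (hq2int.const_mul (1/(4*C₁))),
      integral_const_mul, integral_const_mul] at hmono
    rw [hBeq]
    exact hmono
  have hfrac : (1/(4*C₁)) * (4 * C₁ * B) = B := by field_simp
  have hq2le' : (1/(4*C₁)) * ∫ t, q t ^ 2 ∂μ ≤ B := by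
    rw [← hfrac]
    exact mul_le_mul_of_nonneg_left hq2le (by positivity)
  have hBle : B ≤ 4*C₁ * ∫ t, ‖g t‖^2 ∂μ := by
    have h1 := le_trans hAM (add_le_add_right hq2le' _)
    linarith
  refine le_trans hSB (le_trans hBle (le_of_eq ?_))
  rw [hC₁def]

lemma tail_of_bessel (μ : Measure ℝ) [IsFiniteMeasure μ]
    (hsupp : ∃ R : ℝ, μ {t : ℝ | R < |t|} = 0) (C : ℝ) (hC : 0 < C)
    (hB : MonomialsBesselWithReal μ C) :
    ∀ ε ∈ Set.Ioo (0:ℝ) 1, μ {t : ℝ | 1 - ε < |t|}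
      ≤ ENNReal.ofReal ((32*C + 8*(μ Set.univ).toReal) * ε) := by
  obtain ⟨R, hR⟩ := hsupp
  have haeR : ∀ᵐ t ∂μ, |t| ≤ R := by
    rw [ae_iff]
    simpa using hR
  intro ε hε
  obtain ⟨hε0, hε1⟩ := hε
  set A := {t : ℝ | 1 - ε < |t|} with hAdef
  have hAm : MeasurableSet A := measurableSet_lt measurable_const continuous_abs.measurable
  have hxfin : μ A ≠ ⊤ := measure_ne_top μ A
  set x := (μ A).toReal with hxdef
  have hx0 : 0 ≤ x := ENNReal.toReal_nonneg
  have hu0 : 0 ≤ (μ Set.univ).toReal := ENNReal.toReal_nonneg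
  suffices hxle : x ≤ (32*C + 8*(μ Set.univ).toReal) * ε by
    rw [← ENNReal.ofReal_toReal hxfin]
    exact ENNReal.ofReal_le_ofReal hxle
  rcases le_or_gt ε (1/8) with hεsmall | hεbig
  swap
  · have hxu : x ≤ (μ Set.univ).toReal :=
      ENNReal.toReal_mono (measure_ne_top μ _) (measure_mono (Set.subset_univ A))
    nlinarith
  -- main case : ε ≤ 1/8
  set N := ⌊1/(4*ε)⌋₊ with hNdef
  have hN1 : 1 ≤ N := by
    rw [hNdef]
    apply Nat.le_floor
    rw [le_div_iff₀ (by positivity)]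
    norm_num
    linarith
  have hN1' : (1:ℝ) ≤ (N:ℝ) := by exact_mod_cast hN1
  have hNle : (N:ℝ) ≤ 1/(4*ε) := Nat.floor_le (by positivity)
  have h4εN : (N:ℝ) * (4*ε) ≤ 1 := by
    rw [← le_div_iff₀ (by positivity : (0:ℝ) < 4*ε)]
    exact hNle
  have hflt : 1/(4*ε) < (N:ℝ) + 1 := Nat.lt_floor_add_one _
  have hN8 : 1 < 8*ε*(N:ℝ) := by
    rw [div_lt_iff₀ (by positivity : (0:ℝ) < 4*ε)] at hflt
    nlinarith
  -- Bernoulli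
  have hbern : 1 - 2*(N:ℝ)*ε ≤ (1-ε)^(2*N) := by
    have h := one_add_mul_le_pow (a := -ε) (by linarith) (2*N)
    have e : (1:ℝ) + (↑(2*N)) * (-ε) = 1 - 2*(N:ℝ)*ε := by push_cast; ring
    rw [e] at h
    have e2 : (1:ℝ) + -ε = 1 - ε := by ring
    rw [e2] at h
    exact h
  have hhalf : (1/2:ℝ) ≤ (1-ε)^(2*N) := by nlinarith
  -- the test function
  set g : ℝ → ℂ := A.indicator (fun _ => (1:ℂ)) with hgdef
  have hgmem : MemLp g 2 μ := memLp_indicator_const 2 hAm 1 (Or.inr hxfin)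
  have hgnorm : ∫ t, ‖g t‖^2 ∂μ = x := by
    have e : ∀ t, ‖g t‖^2 = A.indicator (fun _ => (1:ℝ)) t := by
      intro t
      by_cases ht : t ∈ A
      · rw [hgdef, Set.indicator_of_mem ht, Set.indicator_of_mem ht]
        simp
      · rw [hgdef, Set.indicator_of_notMem ht, Set.indicator_of_notMem ht]
        simp
    rw [integral_congr_ae (Filter.Eventually.of_forall e), integral_indicator_const _ hAm]
    simp [hxdef, measureReal_def]
  -- the inner products
  have hIint : ∀ j : ℕ, IntegrableOn (fun t : ℝ => t^(2*j)) A μ := by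
    intro j
    refine Integrable.mono' (integrable_const ((max R 1)^(2*j)))
      ((continuous_pow (2*j)).aestronglyMeasurable) ?_
    have haeR' : ∀ᵐ t ∂(μ.restrict A), |t| ≤ R := ae_restrict_of_ae haeR
    filter_upwards [haeR'] with t ht
    rw [Real.norm_eq_abs, abs_pow]
    exact pow_le_pow_left₀ (abs_nonneg t) (le_trans ht (le_max_left R 1)) (2*j)
  have hIeq : ∀ j : ℕ, ∫ t, g t * (starRingEnd ℂ) ((t:ℂ)^(2*j)) ∂μ
      = ((∫ t in A, t^(2*j) ∂μ : ℝ) : ℂ) := by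
    intro j
    have e : ∀ t, g t * (starRingEnd ℂ) ((t:ℂ)^(2*j))
        = A.indicator (fun s => ((s^(2*j) : ℝ) : ℂ)) t := by
      intro t
      by_cases ht : t ∈ A
      · rw [hgdef, Set.indicator_of_mem ht, Set.indicator_of_mem ht, one_mul,
          ← Complex.ofReal_pow, Complex.conj_ofReal]
      · rw [hgdef, Set.indicator_of_notMem ht, Set.indicator_of_notMem ht, zero_mul]
    rw [integral_congr_ae (Filter.Eventually.of_forall e), integral_indicator hAm]
    exact integral_ofReal
  have hIlow : ∀ j : ℕ, j < N → (1/2:ℝ) * x ≤ ‖∫ t, g t * (starRingEnd ℂ) ((t:ℂ)^(2*j)) ∂μ‖ := by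
    intro j hj
    rw [hIeq j, Complex.norm_real, Real.norm_eq_abs]
    have hge : (1-ε)^(2*j) * x ≤ ∫ t in A, t^(2*j) ∂μ := by
      refine setIntegral_ge_of_const_le_real hAm hxfin ?_ (hIint j)
      intro t ht
      have hlt : 1 - ε < |t| := ht
      have h1 : (1-ε)^(2*j) ≤ |t|^(2*j) :=
        pow_le_pow_left₀ (by linarith) (le_of_lt hlt) (2*j)
      have h2 : |t|^(2*j) = t^(2*j) := by
        rw [← abs_pow, abs_of_nonneg (Even.pow_nonneg (even_two_mul j) t)]
      linarith [h1, h2 ▸ h1]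
    have hmono : (1-ε)^(2*N) ≤ (1-ε)^(2*j) :=
      pow_le_pow_of_le_one (by linarith) (by linarith) (by omega)
    have h3 : (1/2:ℝ) * x ≤ (1-ε)^(2*j) * x := by
      apply mul_le_mul_of_nonneg_right _ hx0
      linarith
    refine le_trans h3 (le_trans hge (le_abs_self _))
  -- apply Bessel
  set F : Finset ℕ := (Finset.range N).image (fun j => 2*j) with hFdef
  have hbess := hB g hgmem F
  rw [hgnorm] at hbess
  have hsum : ∑ k ∈ F, ‖∫ t, g t * (starRingEnd ℂ) ((t:ℂ)^k) ∂μ‖ ^ 2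
      = ∑ j ∈ range N, ‖∫ t, g t * (starRingEnd ℂ) ((t:ℂ)^(2*j)) ∂μ‖ ^ 2 := by
    rw [hFdef]
    exact Finset.sum_image (fun a _ b _ h => by omega)
  have hlower : (N:ℝ) * ((1/2*x)^2) ≤ ∑ j ∈ range N,
      ‖∫ t, g t * (starRingEnd ℂ) ((t:ℂ)^(2*j)) ∂μ‖ ^ 2 := by
    have := Finset.card_nsmul_le_sum (range N)
      (fun j => ‖∫ t, g t * (starRingEnd ℂ) ((t:ℂ)^(2*j)) ∂μ‖ ^ 2) ((1/2*x)^2) ?_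
    · rw [Finset.card_range, nsmul_eq_mul] at this
      exact this
    · intro j hj
      have := hIlow j (Finset.mem_range.mp hj)
      exact pow_le_pow_left₀ (by positivity) this 2
  have hkey : (N:ℝ) * ((1/2*x)^2) ≤ C * x := le_trans hlower (le_trans (le_of_eq hsum.symm) hbess)
  -- conclude
  rcases eq_or_lt_of_le hx0 with hx | hx
  · rw [← hx]
    positivity
  · have hx2 : x^2 ≤ 8*ε*(N:ℝ) * x^2 := by nlinarith [sq_nonneg x]
    nlinarith [hkey, hx2, mul_pos hε0 hx]

end Aux

theorem stmt_8 (μ : Measure ℝ) [IsFiniteMeasure μ]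
    (hsupp : ∃ R : ℝ, μ {t : ℝ | R < |t|} = 0) :
    (∃ C > 0, MonomialsBesselWithReal μ C) ↔
      (∃ C > 0, ∀ ε ∈ Set.Ioo (0 : ℝ) 1, μ {t : ℝ | 1 - ε < |t|} ≤ ENNReal.ofReal (C * ε)) := by
  have hu0 : 0 ≤ (μ Set.univ).toReal := ENNReal.toReal_nonneg
  constructor
  · rintro ⟨C, hC, hB⟩
    exact ⟨32*C + 8*(μ Set.univ).toReal, by nlinarith, tail_of_bessel μ hsupp C hC hB⟩
  · rintro ⟨C, hC, htail⟩
    exact ⟨4*(4*C + 2*(μ Set.univ).toReal), by nlinarith, bessel_of_tail μ C hC htail⟩
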